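/- With the decomposition setup below, the sum of the first l components of ŷ recovers the first component of y: ŷ_1 + ŷ_2 + ⋯ + ŷ_l = Σ_{j=1}^{n} (Σ_{k=1}^{l} a_{jk}) (Σ_{k=1}^{l} x_{jk}) = Σ_{j=1}^n a_j x_j = y_1. -/

import Mathlib

lemma sum_range_mod_shift {M : Type*} [AddCommMonoid M] (l c : ℕ) (hl : 0 < l) (f : ℕ → M) :
    ∑ s ∈ Finset.range l, f ((s + c) % l) = ∑ s ∈ Finset.range l, f s := by
  haveI : NeZero l := ⟨hl.ne'⟩
  rw [← Fin.sum_univ_eq_sum_range (fun s => f ((s + c) % l)) l,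
      ← Fin.sum_univ_eq_sum_range (fun s => f s) l]
  refine Fintype.sum_bijective (Equiv.addRight (Fin.ofNat l c)) (Equiv.bijective _) _ _ ?_
  intro s
  show f ((↑s + c) % l) = f ↑(s + Fin.ofNat l c)
  congr 1
  simp [Fin.add_def, Nat.add_mod]

theorem decomposition_first_component
    (R : Type*) [CommRing R] (n l : ℕ) (hn : 1 ≤ n) (hl : 1 ≤ l)
    (a : ℕ → ℕ → R) (x : ℕ → ℕ → R) (aa xx y : ℕ → R)
    (haa : ∀ i, aa i = ∑ k ∈ Finset.Icc 1 l, a i k)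
    (hxx : ∀ j, xx j = ∑ k ∈ Finset.Icc 1 l, x j k)
    (hy : ∀ i, 1 ≤ i → i ≤ n →
      y i = ∑ j ∈ Finset.Icc 1 n, aa (i + j - 1) * xx j)
    (g : ℕ → R)
    (hg1 : ∀ m, 1 ≤ m → m ≤ 2 * l * (2 * n - 1) →
      g m = a ((m + 2 * l - 1) / (2 * l)) ((m - 1) % l + 1))
    (hg0 : ∀ m, m = 0 ∨ 2 * l * (2 * n - 1) < m → g m = 0)
    (yhat : ℕ → R)
    (hyhat : ∀ s, yhat s = ∑ j ∈ Finset.Icc 1 n, ∑ k ∈ Finset.Icc 1 l,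
      g (s + 2 * l * (j - 1) + k - 1) * x j k) :
    ∑ s ∈ Finset.Icc 1 l, yhat s
        = ∑ j ∈ Finset.Icc 1 n,
            (∑ k ∈ Finset.Icc 1 l, a j k) * (∑ k ∈ Finset.Icc 1 l, x j k) ∧
    ∑ s ∈ Finset.Icc 1 l, yhat s = ∑ j ∈ Finset.Icc 1 n, aa j * xx j ∧
    ∑ s ∈ Finset.Icc 1 l, yhat s = y 1 := by
  have hlpos : 0 < 2 * l := by omega
  have key : ∀ j ∈ Finset.Icc 1 n, ∀ k ∈ Finset.Icc 1 l,
      ∑ s ∈ Finset.Icc 1 l, g (s + 2 * l * (j - 1) + k - 1)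
        = ∑ k' ∈ Finset.Icc 1 l, a j k' := by
    intro j hj k hk
    simp only [Finset.mem_Icc] at hj hk
    have hmul : 2 * l * (j - 1) + 2 * l = 2 * l * j := by
      have h1 : 2 * l * (j - 1 + 1) = 2 * l * (j - 1) + 2 * l := Nat.mul_succ _ _
      have h2 : j - 1 + 1 = j := by omega
      rw [h2] at h1; omega
    have hbig : 2 * l * j ≤ 2 * l * (2 * n - 1) :=
      Nat.mul_le_mul_left _ (by omega)
    have hstep : ∀ s ∈ Finset.Icc 1 l,
        g (s + 2 * l * (j - 1) + k - 1) = a j ((s + k - 2) % l + 1) := by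
      intro s hs
      simp only [Finset.mem_Icc] at hs
      rw [hg1 _ (by omega) (by omega)]
      have hdiv : (s + 2 * l * (j - 1) + k - 1 + 2 * l - 1) / (2 * l) = j := by
        have he : s + 2 * l * (j - 1) + k - 1 + 2 * l - 1 = (s + k - 2) + 2 * l * j := by
          omega
        rw [he, Nat.add_mul_div_left _ _ hlpos, Nat.div_eq_of_lt (by omega), Nat.zero_add]
      have hmod : (s + 2 * l * (j - 1) + k - 1 - 1) % l = (s + k - 2) % l := by
        have hll : 2 * l * (j - 1) = l * (2 * (j - 1)) := by ring
        have he : s + 2 * l * (j - 1) + k - 1 - 1 = (s + k - 2) + l * (2 * (j - 1)) := by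
          omega
        rw [he, Nat.add_mul_mod_self_left]
      rw [hdiv, hmod]
    rw [Finset.sum_congr rfl hstep]
    rw [← Finset.Ico_add_one_right_eq_Icc, Finset.sum_Ico_eq_sum_range, Finset.sum_Ico_eq_sum_range]
    simp only [Nat.add_sub_cancel]
    have he2 : ∀ t ∈ Finset.range l,
        a j ((1 + t + k - 2) % l + 1) = a j ((t + (k - 1)) % l + 1) := by
      intro t ht
      have he3 : 1 + t + k - 2 = t + (k - 1) := by omega
      rw [he3]
    rw [Finset.sum_congr rfl he2]
    calc ∑ t ∈ Finset.range l, a j ((t + (k - 1)) % l + 1)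
        = ∑ t ∈ Finset.range l, a j (t + 1) :=
          sum_range_mod_shift (M := R) l (k - 1) (by omega) (fun r => a j (r + 1))
      _ = ∑ t ∈ Finset.range l, a j (1 + t) := by
          refine Finset.sum_congr rfl fun t ht => ?_
          rw [Nat.add_comm]
  have main : ∑ s ∈ Finset.Icc 1 l, yhat s
      = ∑ j ∈ Finset.Icc 1 n,
          (∑ k ∈ Finset.Icc 1 l, a j k) * (∑ k ∈ Finset.Icc 1 l, x j k) := by
    simp only [hyhat]
    rw [Finset.sum_comm]
    refine Finset.sum_congr rfl fun j hj => ?_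
    rw [Finset.sum_comm]
    rw [Finset.mul_sum]
    refine Finset.sum_congr rfl fun k hk => ?_
    rw [← Finset.sum_mul, key j hj k hk]
  refine ⟨main, ?_, ?_⟩
  · rw [main]
    refine Finset.sum_congr rfl fun j hj => ?_
    rw [haa, hxx]
  · rw [main, hy 1 le_rfl hn]
    refine Finset.sum_congr rfl fun j hj => ?_
    simp only [Finset.mem_Icc] at hj
    rw [haa, hxx, show 1 + j - 1 = j from by omega]
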